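/- Let B be a unital C*-algebra, let ε ≥ 0, and let a, b, c ∈ B with ‖b‖ ≤ 1 and 0 ≤ c ≤ a ≤ 1 (in the canonical order on selfadjoint elements). If ‖a b‖ ≤ ε then ‖c b‖ ≤ √ε. Similarly, if ‖b a‖ ≤ ε then ‖b c‖ ≤ √ε. -/

import Mathlib

/-- Lemma 5.1 of the paper.  In a unital C*-algebra, if `‖b‖ ≤ 1`,
`0 ≤ c ≤ a ≤ 1`, and `‖a b‖ ≤ ε`, then `‖c b‖ ≤ √ε`; similarly with products on the
other side. -/
theorem stmt_1 {B : Type*} [CStarAlgebra B] [PartialOrder B] [StarOrderedRing B]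
    (ε : ℝ) (hε : 0 ≤ ε) (a b c : B) (hb : ‖b‖ ≤ 1)
    (hc0 : 0 ≤ c) (hca : c ≤ a) (ha1 : a ≤ 1) :
    (‖a * b‖ ≤ ε → ‖c * b‖ ≤ Real.sqrt ε) ∧
    (‖b * a‖ ≤ ε → ‖b * c‖ ≤ Real.sqrt ε) := by
  have hc1 : c ≤ 1 := hca.trans ha1
  have hsq : c ^ 2 ≤ c := by
    simpa using CStarAlgebra.pow_antitone hc0 hc1 (by norm_num : (1:ℕ) ≤ 2)
  have hc2a : c ^ 2 ≤ a := hsq.trans hca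
  have hc2 : (0:B) ≤ c ^ 2 := by
    rw [sq]
    nth_rewrite 1 [← (IsSelfAdjoint.of_nonneg hc0).star_eq]
    exact star_mul_self_nonneg c
  have key : ∀ x : B, ‖x * c ^ 2 * star x‖ ≤ ‖x * a * star x‖ := by
    intro x
    have h1 : x * c ^ 2 * star x ≤ x * a * star x := by
      simpa [star_star, mul_assoc] using star_right_conjugate_le_conjugate hc2a x
    have h0 : (0:B) ≤ x * c ^ 2 * star x := by
      simpa [star_star, mul_assoc] using star_right_conjugate_nonneg hc2 x
    exact CStarAlgebra.norm_le_norm_of_nonneg_of_le h0 h1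
  constructor
  · intro hab
    have h1 : ‖c * b‖ ^ 2 = ‖star b * c ^ 2 * b‖ := by
      rw [sq, ← CStarRing.norm_star_mul_self]
      congr 1
      simp [sq, mul_assoc, star_mul, (IsSelfAdjoint.of_nonneg hc0).star_eq]
    have h2 : ‖star b * c ^ 2 * b‖ ≤ ‖star b * a * b‖ := by
      simpa [star_star] using key (star b)
    have h3 : ‖star b * a * b‖ ≤ ε := by
      calc ‖star b * a * b‖ ≤ ‖star b‖ * ‖a * b‖ := by
            rw [mul_assoc]; exact norm_mul_le _ _
        _ ≤ 1 * ε := by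
            exact mul_le_mul (by simpa using hb) hab (norm_nonneg _) zero_le_one
        _ = ε := one_mul ε
    have : ‖c * b‖ ^ 2 ≤ ε := h1 ▸ (h2.trans h3)
    calc ‖c * b‖ = Real.sqrt (‖c * b‖ ^ 2) := by
          rw [Real.sqrt_sq (norm_nonneg _)]
      _ ≤ Real.sqrt ε := Real.sqrt_le_sqrt this
  · intro hba
    have h1 : ‖b * c‖ ^ 2 = ‖b * c ^ 2 * star b‖ := by
      rw [sq, ← CStarRing.norm_self_mul_star]
      congr 1
      simp [sq, mul_assoc, star_mul, (IsSelfAdjoint.of_nonneg hc0).star_eq]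
    have h2 : ‖b * c ^ 2 * star b‖ ≤ ‖b * a * star b‖ := key b
    have h3 : ‖b * a * star b‖ ≤ ε := by
      calc ‖b * a * star b‖ ≤ ‖b * a‖ * ‖star b‖ := norm_mul_le _ _
        _ ≤ ε * 1 := mul_le_mul hba (by simpa using hb) (norm_nonneg _) hε
        _ = ε := mul_one ε
    have : ‖b * c‖ ^ 2 ≤ ε := h1 ▸ (h2.trans h3)
    calc ‖b * c‖ = Real.sqrt (‖b * c‖ ^ 2) := by
          rw [Real.sqrt_sq (norm_nonneg _)]
      _ ≤ Real.sqrt ε := Real.sqrt_le_sqrt this
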